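/- Let v : Finset (Fin m) → ℝ be a matroid rank sum (MRS) function. Then for every S : Finset (Fin m), the discrete Hessian matrix H^v_S is negative semi-definite: for every y : Fin m → ℝ, ∑_{i : Fin m} ∑_{j : Fin m} y i · y j · H^v_S(i,j) ≤ 0. -/

import Mathlib

open Finset

open Classical in
/-- The rank of the finite set `S` in the matroid `M`: the maximum cardinality
of an independent subset of `S`. -/
noncomputable def matFinRank {m : ℕ} (M : Matroid (Fin m)) (S : Finset (Fin m)) : ℕ :=
  (S.powerset.filter
    (fun I : Finset (Fin m) => M.Indep (↑I : Set (Fin m)))).sup Finset.card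

/-- `v` is a matroid rank sum (MRS) function: a nonnegative weighted sum of
rank functions of matroids on `Fin m` with full ground set. -/
def IsMRS {m : ℕ} (v : Finset (Fin m) → ℝ) : Prop :=
  ∃ (κ : ℕ) (M : Fin κ → Matroid (Fin m)) (w : Fin κ → ℝ),
    (∀ ℓ, (M ℓ).E = Set.univ) ∧ (∀ ℓ, 0 ≤ w ℓ) ∧
    ∀ S : Finset (Fin m), v S = ∑ ℓ, w ℓ * (matFinRank (M ℓ) S : ℝ)

/-- The discrete Hessian matrix of the set function `v` at the set `S`. -/
def dHess {m : ℕ} (v : Finset (Fin m) → ℝ) (S : Finset (Fin m)) (i j : Fin m) : ℝ :=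
  v (S ∪ {i, j}) - v (S ∪ {i}) - v (S ∪ {j}) + v S

open Classical in
lemma matFinRank_eq_of_basis {m : ℕ} {M : Matroid (Fin m)} {S I : Finset (Fin m)}
    (hE : M.E = Set.univ) (hI : M.IsBasis (↑I) (↑S)) : matFinRank M S = I.card := by
  apply le_antisymm
  · apply Finset.sup_le
    intro J hJ
    rw [Finset.mem_filter, Finset.mem_powerset] at hJ
    obtain ⟨hJS, hJind⟩ := hJ
    obtain ⟨K, hK, hJK⟩ := hJind.subset_isBasis_of_subset
      (by exact_mod_cast Finset.coe_subset.2 hJS) (by simp [hE])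
    have h1 : (↑J : Set (Fin m)).ncard ≤ K.ncard :=
      Set.ncard_le_ncard hJK (Set.toFinite K)
    have h2 : K.ncard = (↑I : Set (Fin m)).ncard :=
      (hK.isBase_restrict).ncard_eq_ncard_of_isBase (hI.isBase_restrict)
    simpa [Set.ncard_coe_finset] using h1.trans h2.le
  · apply Finset.le_sup (f := Finset.card)
    rw [Finset.mem_filter, Finset.mem_powerset]
    exact ⟨by exact_mod_cast hI.subset, hI.indep⟩

lemma matFinRank_insert_of_mem_closure {m : ℕ} {M : Matroid (Fin m)} {S : Finset (Fin m)}
    (hE : M.E = Set.univ) {i : Fin m} (hi : i ∈ M.closure ↑S) :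
    matFinRank M (S ∪ {i}) = matFinRank M S := by
  classical
  obtain ⟨I, hI⟩ := M.exists_isBasis (↑S) (by simp [hE])
  obtain ⟨I', hI'sub, rfl⟩ := Set.Finite.exists_finset_coe (Set.toFinite I)
  have hcl : M.closure ↑I' = M.closure ↑S := hI.closure_eq_closure
  have hb2 : M.IsBasis (↑I') (↑(S ∪ {i})) := by
    apply hI.indep.isBasis_of_subset_of_subset_closure
    · refine hI.subset.trans ?_
      simp [Finset.coe_union]
    · rw [hcl]
      push_cast
      intro x hx
      rcases hx with hx | hx
      · exact M.subset_closure (↑S) (by simp [hE]) hx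
      · simp only [Set.mem_singleton_iff] at hx; subst hx; exact hi
  rw [matFinRank_eq_of_basis hE hb2, matFinRank_eq_of_basis hE hI]

lemma matFinRank_insert_of_not_mem_closure {m : ℕ} {M : Matroid (Fin m)} {S : Finset (Fin m)}
    (hE : M.E = Set.univ) {i : Fin m} (hi : i ∉ M.closure ↑S) :
    matFinRank M (S ∪ {i}) = matFinRank M S + 1 := by
  classical
  obtain ⟨I, hI⟩ := M.exists_isBasis (↑S) (by simp [hE])
  obtain ⟨I', hI'sub, rfl⟩ := Set.Finite.exists_finset_coe (Set.toFinite I)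
  have hcl : M.closure ↑I' = M.closure ↑S := hI.closure_eq_closure
  have hiS : i ∉ S := by
    intro h
    exact hi (M.subset_closure (↑S) (by simp [hE]) (by exact_mod_cast h))
  have hiI : i ∉ I' := fun h => hiS (by exact_mod_cast hI.subset (by exact_mod_cast h))
  have hind : M.Indep (insert i (↑I')) := by
    rw [hI.indep.insert_indep_iff_of_notMem (by exact_mod_cast hiI)]
    exact ⟨by simp [hE], by rw [hcl]; exact hi⟩
  have hb2 : M.IsBasis (↑(insert i I')) (↑(S ∪ {i})) := by
    rw [Finset.coe_insert]
    apply hind.isBasis_of_subset_of_subset_closure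
    · push_cast
      exact Set.insert_subset (by simp) (hI.subset.trans (by simp))
    · push_cast
      rw [Set.union_singleton]
      apply Set.insert_subset (M.mem_closure_of_mem (Set.mem_insert _ _) (by simp [hE]))
      refine (Set.Subset.trans ?_ (M.closure_subset_closure (Set.subset_insert i ↑I')))
      rw [hcl]
      exact M.subset_closure (↑S) (by simp [hE])
  rw [matFinRank_eq_of_basis hE hb2, matFinRank_eq_of_basis hE hI,
    Finset.card_insert_of_notMem hiI]

open Classical in
lemma hess_formula {m : ℕ} {M : Matroid (Fin m)} (hE : M.E = Set.univ)
    (S : Finset (Fin m)) (i j : Fin m) :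
    dHess (fun T => (matFinRank M T : ℝ)) S i j =
      if i ∉ M.closure ↑S ∧ j ∉ M.closure ↑S ∧
          M.closure ↑(S ∪ {i}) = M.closure ↑(S ∪ {j}) then -1 else 0 := by
  classical
  have hpair1 : S ∪ {i, j} = (S ∪ {j}) ∪ {i} := by ext x; simp; tauto
  have hpair2 : S ∪ {i, j} = (S ∪ {i}) ∪ {j} := by ext x; simp <;> tauto
  have hSi : (↑(S ∪ {i}) : Set (Fin m)) = insert i ↑S := by push_cast; rw [Set.union_singleton]
  have hSj : (↑(S ∪ {j}) : Set (Fin m)) = insert j ↑S := by push_cast; rw [Set.union_singleton]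
  by_cases hi : i ∈ M.closure ↑S
  · rw [if_neg (by tauto)]
    have h1 : matFinRank M (S ∪ {i}) = matFinRank M S :=
      matFinRank_insert_of_mem_closure hE hi
    have h2 : matFinRank M (S ∪ {i, j}) = matFinRank M (S ∪ {j}) := by
      rw [hpair1]
      exact matFinRank_insert_of_mem_closure hE
        ((M.closure_subset_closure (by rw [hSj]; exact Set.subset_insert _ _)) hi)
    simp only [dHess, h1, h2]; ring
  · by_cases hj : j ∈ M.closure ↑S
    · rw [if_neg (by tauto)]
      have h1 : matFinRank M (S ∪ {j}) = matFinRank M S :=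
        matFinRank_insert_of_mem_closure hE hj
      have h2 : matFinRank M (S ∪ {i, j}) = matFinRank M (S ∪ {i}) := by
        rw [hpair2]
        exact matFinRank_insert_of_mem_closure hE
          ((M.closure_subset_closure (by rw [hSi]; exact Set.subset_insert _ _)) hj)
      simp only [dHess, h1, h2]; ring
    · have hri : matFinRank M (S ∪ {i}) = matFinRank M S + 1 :=
        matFinRank_insert_of_not_mem_closure hE hi
      have hrj : matFinRank M (S ∪ {j}) = matFinRank M S + 1 :=
        matFinRank_insert_of_not_mem_closure hE hj
      by_cases heq : M.closure ↑(S ∪ {i}) = M.closure ↑(S ∪ {j})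
      · rw [if_pos ⟨hi, hj, heq⟩]
        have hjmem : j ∈ M.closure ↑(S ∪ {i}) := by
          rw [heq]
          exact M.subset_closure _ (by simp [hE]) (by simp)
        have h2 : matFinRank M (S ∪ {i, j}) = matFinRank M (S ∪ {i}) := by
          rw [hpair2]
          exact matFinRank_insert_of_mem_closure hE hjmem
        simp only [dHess, h2, hri, hrj]; push_cast; ring
      · rw [if_neg (by tauto)]
        have hjnot : j ∉ M.closure ↑(S ∪ {i}) := by
          intro hj'
          rw [hSi] at hj'
          have hex := Matroid.closure_exchange (X := ↑S) (e := j) (f := i) ⟨hj', hj⟩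
          apply heq
          rw [hSi, hSj]
          apply le_antisymm
          · exact M.closure_subset_closure_of_subset_closure
              (Set.insert_subset hex.1 ((M.subset_closure ↑S (by simp [hE])).trans
                (M.closure_subset_closure (Set.subset_insert _ _))))
          · exact M.closure_subset_closure_of_subset_closure
              (Set.insert_subset hj' ((M.subset_closure ↑S (by simp [hE])).trans
                (M.closure_subset_closure (Set.subset_insert _ _))))
        have h2 : matFinRank M (S ∪ {i, j}) = matFinRank M (S ∪ {i}) + 1 := by
          rw [hpair2]
          exact matFinRank_insert_of_not_mem_closure hE hjnot
        simp only [dHess, h2, hri, hrj]; push_cast; ring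

open Classical in
lemma single_sum {m : ℕ} {M : Matroid (Fin m)} (hE : M.E = Set.univ)
    (S : Finset (Fin m)) (y : Fin m → ℝ) :
    ∑ i : Fin m, ∑ j : Fin m,
      y i * y j * dHess (fun T => (matFinRank M T : ℝ)) S i j ≤ 0 := by
  classical
  set g : Fin m → Set (Fin m) := fun i => M.closure ↑(S ∪ {i}) with hg_def
  set T : Finset (Fin m) := Finset.univ.filter (fun i => i ∉ M.closure ↑S) with hT_def
  have key : ∀ i j, y i * y j * dHess (fun T => (matFinRank M T : ℝ)) S i j =
      if j ∈ T then (if i ∈ T then (if g i = g j then -(y i * y j) else 0) else 0) else 0 := by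
    intro i j
    rw [hess_formula hE S i j]
    by_cases hi : i ∈ M.closure ↑S <;> by_cases hj : j ∈ M.closure ↑S <;>
      by_cases hg : M.closure ↑(S ∪ {i}) = M.closure ↑(S ∪ {j}) <;>
      simp [T, g, Finset.mem_filter, hi, hj, hg] <;> ring
  have step1 : (∑ i : Fin m, ∑ j : Fin m,
      y i * y j * dHess (fun T => (matFinRank M T : ℝ)) S i j)
      = ∑ j ∈ T, ∑ i ∈ T, (if g i = g j then -(y i * y j) else 0) := by
    simp only [key]
    simp only [Finset.sum_ite_mem, Finset.univ_inter]
    rw [Finset.sum_comm]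
    apply Finset.sum_congr rfl
    intro j _
    simp only [Finset.sum_ite_mem, Finset.univ_inter]
  set A : Set (Fin m) → ℝ := fun b => ∑ i ∈ T.filter (fun i => g i = b), y i with hA_def
  have step2 : (∑ j ∈ T, ∑ i ∈ T, (if g i = g j then -(y i * y j) else 0))
      = - ∑ j ∈ T, y j * A (g j) := by
    rw [← Finset.sum_neg_distrib]
    apply Finset.sum_congr rfl
    intro j _
    rw [← Finset.sum_filter]
    simp only [A, Finset.mul_sum, ← Finset.sum_neg_distrib]
    apply Finset.sum_congr rfl
    intro i _
    ring
  have step3 : (∑ j ∈ T, y j * A (g j)) = ∑ b ∈ T.image g, (A b) ^ 2 := by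
    rw [← Finset.sum_fiberwise_of_maps_to (fun j hj => Finset.mem_image_of_mem g hj)
      (fun j => y j * A (g j))]
    apply Finset.sum_congr rfl
    intro b _
    have : ∀ j ∈ T.filter (fun j => g j = b), y j * A (g j) = y j * A b := by
      intro j hj
      rw [Finset.mem_filter] at hj
      rw [hj.2]
    rw [Finset.sum_congr rfl this, ← Finset.sum_mul]
    simp only [A]
    ring
  rw [step1, step2, step3]
  simp only [neg_nonpos]
  exact Finset.sum_nonneg fun b _ => sq_nonneg _


theorem stmt8 (m : ℕ) (v : Finset (Fin m) → ℝ) (hv : IsMRS v)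
    (S : Finset (Fin m)) (y : Fin m → ℝ) :
    ∑ i : Fin m, ∑ j : Fin m, y i * y j * dHess v S i j ≤ 0 := by
  obtain ⟨κ, M, w, hE, hw, hvS⟩ := hv
  have hd : ∀ i j, dHess v S i j
      = ∑ ℓ, w ℓ * dHess (fun T => (matFinRank (M ℓ) T : ℝ)) S i j := by
    intro i j
    simp only [dHess, hvS, ← Finset.sum_sub_distrib, ← Finset.sum_add_distrib]
    apply Finset.sum_congr rfl
    intro ℓ _
    ring
  have h1 : (∑ i : Fin m, ∑ j : Fin m, y i * y j * dHess v S i j)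
      = ∑ ℓ, ∑ i : Fin m, ∑ j : Fin m,
          y i * y j * (w ℓ * dHess (fun T => (matFinRank (M ℓ) T : ℝ)) S i j) := by
    simp only [hd, Finset.mul_sum]
    have h2 : ∀ i : Fin m, (∑ j : Fin m, ∑ ℓ,
        y i * y j * (w ℓ * dHess (fun T => (matFinRank (M ℓ) T : ℝ)) S i j))
        = ∑ ℓ, ∑ j : Fin m,
        y i * y j * (w ℓ * dHess (fun T => (matFinRank (M ℓ) T : ℝ)) S i j) :=
      fun i => Finset.sum_comm
    simp only [h2]
    exact Finset.sum_comm
  rw [h1]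
  apply Finset.sum_nonpos
  intro ℓ _
  have h3 : (∑ i : Fin m, ∑ j : Fin m,
      y i * y j * (w ℓ * dHess (fun T => (matFinRank (M ℓ) T : ℝ)) S i j))
      = w ℓ * ∑ i : Fin m, ∑ j : Fin m,
        y i * y j * dHess (fun T => (matFinRank (M ℓ) T : ℝ)) S i j := by
    simp only [Finset.mul_sum]
    apply Finset.sum_congr rfl
    intro i _
    apply Finset.sum_congr rfl
    intro j _
    ring
  rw [h3]
  exact mul_nonpos_of_nonneg_of_nonpos (hw ℓ) (single_sum (hE ℓ) S y)
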